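/- arXiv:1410.8625 — 5 statements merged into one kernel-verified Lean document; each statement's English description precedes it below -/
import Mathlib

section
/- (Lemma III.6, summability part) Let Assumption 2 hold and let (x^k), (y^k), (p^k) be BADMM iterates. If the sequence z^k := (x^k, y^k, p^k) is bounded, then ∑_{k=0}^∞ ‖z^k − z^{k+1}‖² < ∞; in particular ‖z^k − z^{k+1}‖ → 0 as k → ∞. -/
open scoped InnerProductSpace
open InnerProductSpace (toDual)
section helpers
variable {E M : Type*} [NormedAddCommGroup E] [InnerProductSpace ℝ E] [CompleteSpace E]
  [NormedAddCommGroup M] [InnerProductSpace ℝ M] [CompleteSpace M]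

lemma myHasGradientAt {f : E → ℝ} {D : E →L[ℝ] ℝ} {g : E} {x : E}
    (h : HasFDerivAt f D x) (hg : ∀ v, D v = ⟪g, v⟫_ℝ) : HasGradientAt f g x := by
  have hD : D = toDual ℝ E g := by
    ext v; simp [hg v]
  rw [hasGradientAt_iff_hasFDerivAt, ← hD]; exact h

lemma grad_add {f g : E → ℝ} {a b x : E} (hf : HasGradientAt f a x)
    (hg : HasGradientAt g b x) : HasGradientAt (fun z => f z + g z) (a + b) x := by
  apply myHasGradientAt (hf.hasFDerivAt.add hg.hasFDerivAt)
  intro v; simp [inner_add_left]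

lemma grad_sub {f g : E → ℝ} {a b x : E} (hf : HasGradientAt f a x)
    (hg : HasGradientAt g b x) : HasGradientAt (fun z => f z - g z) (a - b) x := by
  apply myHasGradientAt (hf.hasFDerivAt.sub hg.hasFDerivAt)
  intro v; simp [inner_sub_left]

lemma grad_inner_const (c w : E) (x : E) :
    HasGradientAt (fun z => ⟪c, z - w⟫_ℝ) c x := by
  have h : HasFDerivAt (fun z : E => ⟪c, z - w⟫_ℝ) (innerSL ℝ c) x := by
    have h0 : HasFDerivAt (fun z : E => (innerSL ℝ c) z - ⟪c, w⟫_ℝ) (innerSL ℝ c) x :=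
      (innerSL ℝ c).hasFDerivAt.sub_const _
    convert h0 using 2 with z
    simp [inner_sub_right]
  exact myHasGradientAt h (fun v => by simp)

lemma grad_sq (μ : ℝ) (x : E) :
    HasGradientAt (fun z : E => μ / 2 * ‖z‖ ^ 2) (μ • x) x := by
  have h : HasFDerivAt (fun z : E => ‖z‖ ^ 2) (2 • (innerSL ℝ x)) x := by
    simpa using (hasFDerivAt_id x).norm_sq
  apply myHasGradientAt (h.const_mul (μ / 2))
  intro v
  simp [real_inner_smul_left, two_smul, inner_add_left]
  ring


lemma grad_inner_lin (A : E →L[ℝ] M) (c b : M) (x : E) :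
    HasGradientAt (fun z => ⟪c, A z - b⟫_ℝ) (ContinuousLinearMap.adjoint A c) x := by
  have h : HasFDerivAt (fun z : E => ⟪c, A z - b⟫_ℝ) ((innerSL ℝ c).comp A) x := by
    have h0 : HasFDerivAt (fun z : E => ((innerSL ℝ c).comp A) z - ⟪c, b⟫_ℝ)
        ((innerSL ℝ c).comp A) x := (((innerSL ℝ c).comp A).hasFDerivAt).sub_const _
    convert h0 using 2 with z
    simp [inner_sub_right]
  apply myHasGradientAt h
  intro v; simp [ContinuousLinearMap.adjoint_inner_left]

lemma grad_quad (A : E →L[ℝ] M) (b : M) (α : ℝ) (x : E) :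
    HasGradientAt (fun z => α / 2 * ‖A z - b‖ ^ 2)
      (α • ContinuousLinearMap.adjoint A (A x - b)) x := by
  have h1 : HasFDerivAt (fun z : E => A z - b) A x := A.hasFDerivAt.sub_const b
  have h : HasFDerivAt (fun z : E => ‖A z - b‖ ^ 2)
      (2 • (innerSL ℝ (A x - b)).comp A) x := h1.norm_sq
  apply myHasGradientAt (h.const_mul (α / 2))
  intro v
  simp [real_inner_smul_left, two_smul, inner_add_left, inner_sub_left,
    ContinuousLinearMap.adjoint_inner_left]
  ring


lemma grad_firstorder {h : E → ℝ} (hconv : ConvexOn ℝ Set.univ h) {v g : E}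
    (hg : HasGradientAt h g v) (u : E) : ⟪g, u - v⟫_ℝ ≤ h u - h v := by
  set q : ℝ → ℝ := fun t => h (v + t • (u - v)) with hq
  have hline : HasDerivAt (fun t : ℝ => v + t • (u - v)) (u - v) 0 := by
    simpa using ((hasDerivAt_id (0:ℝ)).smul_const (u - v)).const_add v
  have hd : HasDerivAt q ⟪g, u - v⟫_ℝ 0 := by
    have hgv : HasFDerivAt h (toDual ℝ E g) (v + (0:ℝ) • (u - v)) := by
      simpa using hg.hasFDerivAt
    have := hgv.comp_hasDerivAt (0:ℝ) hline
    simp at this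
    exact this
  have hslope : Filter.Tendsto (slope q 0) (nhdsWithin 0 (Set.Ioi 0)) (nhds ⟪g, u - v⟫_ℝ) := by
    have := hasDerivAt_iff_tendsto_slope.1 hd
    exact this.mono_left (nhdsWithin_mono _ (by intro t ht; exact ne_of_gt ht))
  refine le_of_tendsto hslope ?_
  have hmem : Set.Ioo (0:ℝ) 1 ∈ nhdsWithin (0:ℝ) (Set.Ioi 0) :=
    Ioo_mem_nhdsGT_of_mem (by constructor <;> norm_num)
  filter_upwards [hmem] with t ht
  have ht0 : 0 < t := ht.1
  have hconvineq : q t ≤ (1 - t) * h v + t * h u := by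
    have := hconv.2 (Set.mem_univ v) (Set.mem_univ u) (by linarith [ht.2] : (0:ℝ) ≤ 1 - t)
      (le_of_lt ht0) (by ring)
    have heq : (1 - t) • v + t • u = v + t • (u - v) := by module
    rw [heq] at this
    simpa [hq] using this
  have hq0 : q 0 = h v := by simp [hq]
  have : slope q 0 t = (q t - q 0) / t := by
    rw [slope_def_field, sub_zero]
  rw [this, div_le_iff₀ ht0]
  nlinarith [hconvineq]


lemma strong_bregman {h : E → ℝ} {μ : ℝ}
    (hconv : ConvexOn ℝ Set.univ (fun z => h z - μ / 2 * ‖z‖ ^ 2))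
    {v gv : E} (hgv : HasGradientAt h gv v) (u : E) :
    h v + ⟪gv, u - v⟫_ℝ + μ / 2 * ‖u - v‖ ^ 2 ≤ h u := by
  have hH : HasGradientAt (fun z => h z - μ / 2 * ‖z‖ ^ 2) (gv - μ • v) v :=
    grad_sub hgv (grad_sq μ v)
  have := grad_firstorder hconv hH u
  have hnorm : ‖u - v‖ ^ 2 = ‖u‖ ^ 2 - 2 * ⟪u, v⟫_ℝ + ‖v‖ ^ 2 := by
    rw [norm_sub_sq_real]
  have hin : ⟪gv - μ • v, u - v⟫_ℝ
      = ⟪gv, u - v⟫_ℝ - μ * ⟪v, u⟫_ℝ + μ * ‖v‖ ^ 2 := by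
    rw [inner_sub_left, real_inner_smul_left,
      inner_sub_right (𝕜 := ℝ) (x := v) (y := u) (z := v),
      real_inner_self_eq_norm_sq]
    ring
  rw [hin] at this
  have hc : ⟪u, v⟫_ℝ = ⟪v, u⟫_ℝ := real_inner_comm v u
  rw [hnorm, hc]
  nlinarith [this]

lemma grad_zero_of_min {F : E → ℝ} {G x₀ : E} (hmin : ∀ z, F x₀ ≤ F z)
    (hG : HasGradientAt F G x₀) : G = 0 := by
  have hloc : IsLocalMin F x₀ := Filter.Eventually.of_forall (fun z => hmin z)
  have h0 : toDual ℝ E G = 0 := hloc.hasFDerivAt_eq_zero hG.hasFDerivAt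
  have := congrArg (fun D => (toDual ℝ E).symm D) h0
  simpa using this

lemma lsc_bddBelow_on_compact {X : Type*} [TopologicalSpace X] {g : X → ℝ}
    (hg : LowerSemicontinuous g) {K : Set X} (hK : IsCompact K) :
    ∃ c : ℝ, ∀ z ∈ K, c ≤ g z := by
  have hcover : K ⊆ ⋃ n : ℕ, g ⁻¹' Set.Ioi (-(n : ℝ)) := by
    intro z _
    obtain ⟨n, hn⟩ := exists_nat_gt (-(g z))
    exact Set.mem_iUnion.2 ⟨n, by simp; linarith⟩
  obtain ⟨t, ht⟩ := hK.elim_finite_subcover (fun n : ℕ => g ⁻¹' Set.Ioi (-(n : ℝ)))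
    (fun n => hg.isOpen_preimage _) hcover
  refine ⟨-(t.sup id : ℕ), fun z hz => ?_⟩
  obtain ⟨n, hn, hzn⟩ := Set.mem_iUnion₂.1 (ht hz)
  have : (n : ℝ) ≤ (t.sup id : ℕ) := by
    exact_mod_cast Finset.le_sup (f := id) hn
  have : -((t.sup id : ℕ) : ℝ) ≤ -(n : ℝ) := by linarith
  exact le_of_lt (lt_of_le_of_lt this hzn)


end helpers

/-- The augmented Lagrangian `L_α(x,y,p)`. -/
noncomputable def augL {n₁ n₂ m : ℕ}
    (A : EuclideanSpace ℝ (Fin n₁) →L[ℝ] EuclideanSpace ℝ (Fin m))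
    (B : EuclideanSpace ℝ (Fin n₂) →L[ℝ] EuclideanSpace ℝ (Fin m))
    (f : EuclideanSpace ℝ (Fin n₁) → ℝ) (g : EuclideanSpace ℝ (Fin n₂) → ℝ)
    (α : ℝ) (x : EuclideanSpace ℝ (Fin n₁)) (y : EuclideanSpace ℝ (Fin n₂))
    (p : EuclideanSpace ℝ (Fin m)) : ℝ :=
  f x + g y + ⟪p, A x - B y⟫_ℝ + α / 2 * ‖A x - B y‖ ^ 2

/-- Bregman distance of a differentiable function `h` with gradient `h'`. -/
noncomputable def bregman {n : ℕ} (h : EuclideanSpace ℝ (Fin n) → ℝ)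
    (h' : EuclideanSpace ℝ (Fin n) → EuclideanSpace ℝ (Fin n))
    (u v : EuclideanSpace ℝ (Fin n)) : ℝ :=
  h u - h v - ⟪h' v, u - v⟫_ℝ

set_option maxHeartbeats 2000000 in
theorem badmm_lemma_III_6_summable
{n₁ n₂ m : ℕ} (hn₁ : 0 < n₁) (hn₂ : 0 < n₂) (hm : 0 < m)
    (A : EuclideanSpace ℝ (Fin n₁) →L[ℝ] EuclideanSpace ℝ (Fin m))
    (B : EuclideanSpace ℝ (Fin n₂) →L[ℝ] EuclideanSpace ℝ (Fin m))
    (f : EuclideanSpace ℝ (Fin n₁) → ℝ) (g : EuclideanSpace ℝ (Fin n₂) → ℝ)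
    (f' : EuclideanSpace ℝ (Fin n₁) → EuclideanSpace ℝ (Fin n₁))
    (hfC1 : ContDiff ℝ 1 f) (hfgrad : ∀ u, HasGradientAt f (f' u) u)
    (ℓf : ℝ) (hℓf : 0 ≤ ℓf) (hf' : ∀ u v, ‖f' u - f' v‖ ≤ ℓf * ‖u - v‖)
    (hg : LowerSemicontinuous g)
    (φ : EuclideanSpace ℝ (Fin n₁) → ℝ)
    (φ' : EuclideanSpace ℝ (Fin n₁) → EuclideanSpace ℝ (Fin n₁))
    (hφconv : ConvexOn ℝ Set.univ φ) (hφdiff : ∀ u, HasGradientAt φ (φ' u) u)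
    (ℓφ : ℝ) (hℓφ : 0 ≤ ℓφ) (hφ' : ∀ u v, ‖φ' u - φ' v‖ ≤ ℓφ * ‖u - v‖)
    (ψ : EuclideanSpace ℝ (Fin n₂) → ℝ)
    (ψ' : EuclideanSpace ℝ (Fin n₂) → EuclideanSpace ℝ (Fin n₂))
    (hψconv : ConvexOn ℝ Set.univ ψ) (hψdiff : ∀ u, HasGradientAt ψ (ψ' u) u)
    (ℓψ : ℝ) (hℓψ : 0 ≤ ℓψ) (hψ' : ∀ u v, ‖ψ' u - ψ' v‖ ≤ ℓψ * ‖u - v‖)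
    (α μ₀ : ℝ) (hα : 0 < α) (hμ₀ : 0 < μ₀)
    (hA : ∀ q : EuclideanSpace ℝ (Fin m),
      μ₀ * ‖q‖ ^ 2 ≤ ‖ContinuousLinearMap.adjoint A q‖ ^ 2)
    (μ₁ : ℝ) (hμ₁ : 0 < μ₁)
    (hsc : (∀ (y : EuclideanSpace ℝ (Fin n₂)) (p : EuclideanSpace ℝ (Fin m)),
          ConvexOn ℝ Set.univ (fun x => augL A B f g α x y p - μ₁ / 2 * ‖x‖ ^ 2)) ∨
        ConvexOn ℝ Set.univ (fun x => φ x - μ₁ / 2 * ‖x‖ ^ 2))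
    (hαbig : α > 4 * ((ℓf + ℓφ) ^ 2 + ℓφ ^ 2) / (μ₁ * μ₀))
    (x : ℕ → EuclideanSpace ℝ (Fin n₁)) (y : ℕ → EuclideanSpace ℝ (Fin n₂))
    (p : ℕ → EuclideanSpace ℝ (Fin m))
    (hy : ∀ k, ∀ y' : EuclideanSpace ℝ (Fin n₂),
      augL A B f g α (x k) (y (k + 1)) (p k) + bregman ψ ψ' (y (k + 1)) (y k) ≤
        augL A B f g α (x k) y' (p k) + bregman ψ ψ' y' (y k))
    (hx : ∀ k, ∀ x' : EuclideanSpace ℝ (Fin n₁),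
      augL A B f g α (x (k + 1)) (y (k + 1)) (p k) + bregman φ φ' (x (k + 1)) (x k) ≤
        augL A B f g α x' (y (k + 1)) (p k) + bregman φ φ' x' (x k))
    (hp : ∀ k, p (k + 1) = p k + α • (A (x (k + 1)) - B (y (k + 1))))
    (μ₂ : ℝ) (hμ₂ : 0 < μ₂)
    (hψsc : ConvexOn ℝ Set.univ (fun z => ψ z - μ₂ / 2 * ‖z‖ ^ 2))
    (hbdd : Bornology.IsBounded (Set.range fun k => (x k, y k, p k))) :
    Summable (fun k => ‖((x k, y k, p k) : EuclideanSpace ℝ (Fin n₁) ×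
        EuclideanSpace ℝ (Fin n₂) × EuclideanSpace ℝ (Fin m))
        - (x (k + 1), y (k + 1), p (k + 1))‖ ^ 2) ∧
      Filter.Tendsto (fun k => ‖((x k, y k, p k) : EuclideanSpace ℝ (Fin n₁) ×
          EuclideanSpace ℝ (Fin n₂) × EuclideanSpace ℝ (Fin m))
          - (x (k + 1), y (k + 1), p (k + 1))‖)
        Filter.atTop (nhds 0) := by
  classical
  set AT := ContinuousLinearMap.adjoint A with hAT
  set u : ℕ → ℝ := fun k => ‖x (k+1) - x k‖^2 with hu
  set v : ℕ → ℝ := fun k => ‖y (k+1) - y k‖^2 with hv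
  set w : ℕ → ℝ := fun k => ‖p (k+1) - p k‖^2 with hw
  set L : ℕ → ℝ := fun k => augL A B f g α (x k) (y k) (p k) with hL
  have hu0 : ∀ k, 0 ≤ u k := fun k => sq_nonneg _
  have hv0 : ∀ k, 0 ≤ v k := fun k => sq_nonneg _
  have hw0 : ∀ k, 0 ≤ w k := fun k => sq_nonneg _
  -- gradient of the x-update objective
  have hFgrad : ∀ (k : ℕ) (x' : EuclideanSpace ℝ (Fin n₁)),
      HasGradientAt (fun z => augL A B f g α z (y (k+1)) (p k) + bregman φ φ' z (x k))
        (f' x' + AT (p k) + α • AT (A x' - B (y (k+1))) + (φ' x' - φ' (x k))) x' := by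
    intro k x'
    have h1 : HasGradientAt (fun z => f z + g (y (k+1))) (f' x' + 0) x' :=
      grad_add (hfgrad x') (hasGradientAt_const x' (g (y (k+1))))
    have h2 := grad_add h1 (grad_inner_lin A (p k) (B (y (k+1))) x')
    have h3 := grad_add h2 (grad_quad A (B (y (k+1))) α x')
    have h4 := grad_sub (hφdiff x') (hasGradientAt_const x' (φ (x k)))
    have h5 := grad_sub h4 (grad_inner_const (φ' (x k)) (x k) x')
    have h6 := grad_add h3 h5
    simp only [add_zero, sub_zero] at h6
    simp only [augL, bregman]
    exact h6
  -- stationarity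
  have hstat : ∀ k, AT (p (k+1)) = -(f' (x (k+1)) + (φ' (x (k+1)) - φ' (x k))) := by
    intro k
    have h0 := grad_zero_of_min (fun z => hx k z) (hFgrad k (x (k+1)))
    have hp' : AT (p (k+1)) = AT (p k) + α • AT (A (x (k+1)) - B (y (k+1))) := by
      rw [hp k, map_add, map_smul]
    rw [hp']
    have hsum : AT (p k) + α • AT (A (x (k+1)) - B (y (k+1)))
        = (f' (x (k+1)) + AT (p k) + α • AT (A (x (k+1)) - B (y (k+1)))
          + (φ' (x (k+1)) - φ' (x k))) - (f' (x (k+1)) + (φ' (x (k+1)) - φ' (x k))) := by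
      abel
    rw [hsum, h0, zero_sub]
  -- dual step control
  have hI3 : ∀ k, μ₀ * w (k+1) ≤ 2*(ℓf+ℓφ)^2 * u (k+1) + 2*ℓφ^2 * u k := by
    intro k
    have h2 : AT (p (k+2) - p (k+1)) = (f' (x (k+1)) - f' (x (k+2)))
        + ((φ' (x (k+1)) - φ' (x (k+2))) + (φ' (x (k+1)) - φ' (x k))) := by
      rw [map_sub, hstat (k+1), hstat k]; abel
    have e1 : ‖f' (x (k+1)) - f' (x (k+2))‖ ≤ ℓf * ‖x (k+2) - x (k+1)‖ := by
      calc ‖f' (x (k+1)) - f' (x (k+2))‖ ≤ ℓf * ‖x (k+1) - x (k+2)‖ := hf' _ _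
        _ = ℓf * ‖x (k+2) - x (k+1)‖ := by rw [norm_sub_rev]
    have e2 : ‖φ' (x (k+1)) - φ' (x (k+2))‖ ≤ ℓφ * ‖x (k+2) - x (k+1)‖ := by
      calc ‖φ' (x (k+1)) - φ' (x (k+2))‖ ≤ ℓφ * ‖x (k+1) - x (k+2)‖ := hφ' _ _
        _ = ℓφ * ‖x (k+2) - x (k+1)‖ := by rw [norm_sub_rev]
    have e3 : ‖φ' (x (k+1)) - φ' (x k)‖ ≤ ℓφ * ‖x (k+1) - x k‖ := hφ' _ _
    have hn : ‖AT (p (k+2) - p (k+1))‖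
        ≤ (ℓf + ℓφ) * ‖x (k+2) - x (k+1)‖ + ℓφ * ‖x (k+1) - x k‖ := by
      rw [h2]
      refine le_trans (norm_add_le _ _) ?_
      have h4 := norm_add_le (φ' (x (k+1)) - φ' (x (k+2))) (φ' (x (k+1)) - φ' (x k))
      linarith
    have hq2 := hA (p (k+2) - p (k+1))
    have hS : ‖AT (p (k+2) - p (k+1))‖^2
        ≤ ((ℓf+ℓφ)*‖x (k+2) - x (k+1)‖ + ℓφ*‖x (k+1) - x k‖)^2 :=
      pow_le_pow_left₀ (norm_nonneg _) hn 2
    have hwq : w (k+1) = ‖p (k+2) - p (k+1)‖^2 := rfl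
    have huq1 : u (k+1) = ‖x (k+2) - x (k+1)‖^2 := rfl
    have huq0 : u k = ‖x (k+1) - x k‖^2 := rfl
    rw [hwq, huq1, huq0]
    nlinarith [hq2, hS, sq_nonneg ((ℓf+ℓφ)*‖x (k+2) - x (k+1)‖ - ℓφ*‖x (k+1) - x k‖)]
  -- y-descent
  have hY1 : ∀ k, augL A B f g α (x k) (y (k+1)) (p k) ≤ L k - μ₂/2 * v k := by
    intro k
    have h := hy k (y k)
    have hb0 : bregman ψ ψ' (y k) (y k) = 0 := by simp [bregman]
    have hbs := strong_bregman hψsc (hψdiff (y k)) (y (k+1))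
    have hvk : v k = ‖y (k+1) - y k‖^2 := rfl
    have hbreg : μ₂/2 * v k ≤ bregman ψ ψ' (y (k+1)) (y k) := by
      simp only [bregman, hvk]; linarith
    have hLk : L k = augL A B f g α (x k) (y k) (p k) := rfl
    rw [hb0] at h
    rw [hLk]
    linarith
  -- x-descent
  have hX1 : ∀ k, augL A B f g α (x (k+1)) (y (k+1)) (p k) ≤
      augL A B f g α (x k) (y (k+1)) (p k) - μ₁/2 * u k := by
    intro k
    have hbrφ : ∀ s t, 0 ≤ bregman φ φ' s t := by
      intro s t
      have := grad_firstorder hφconv (hφdiff t) s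
      simp only [bregman]; linarith
    have hbreg_self : bregman φ φ' (x k) (x k) = 0 := by simp [bregman]
    have huk : u k = ‖x (k+1) - x k‖^2 := rfl
    rcases hsc with hscA | hscB
    · have h2 : ConvexOn ℝ Set.univ (fun z => bregman φ φ' z (x k)) := by
        have haff : ConvexOn ℝ Set.univ (fun z : EuclideanSpace ℝ (Fin n₁) =>
            -(φ (x k)) - ⟪φ' (x k), z - x k⟫_ℝ) := by
          refine ⟨convex_univ, fun a _ b _ s t hs ht hst => le_of_eq ?_⟩
          simp only [inner_sub_right, inner_add_right, real_inner_smul_right, smul_eq_mul]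
          linear_combination (φ (x k) - ⟪φ' (x k), x k⟫_ℝ) * hst
        have h3 := hφconv.add haff
        have heq : (fun z => bregman φ φ' z (x k))
            = fun z => φ z + (-(φ (x k)) - ⟪φ' (x k), z - x k⟫_ℝ) := by
          funext z; simp only [bregman]; ring
        rw [heq]; exact h3
      have hconvF : ConvexOn ℝ Set.univ (fun z =>
          (augL A B f g α z (y (k+1)) (p k) + bregman φ φ' z (x k)) - μ₁/2 * ‖z‖^2) := by
        have h1 := hscA (y (k+1)) (p k)
        have h3 := h1.add h2
        have heq : (fun z => (augL A B f g α z (y (k+1)) (p k) + bregman φ φ' z (x k))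
            - μ₁/2 * ‖z‖^2)
            = fun z => (augL A B f g α z (y (k+1)) (p k) - μ₁/2 * ‖z‖^2)
              + bregman φ φ' z (x k) := by
          funext z; ring
        rw [heq]; exact h3
      have hG0 := grad_zero_of_min (fun z => hx k z) (hFgrad k (x (k+1)))
      have hsb := strong_bregman hconvF (hFgrad k (x (k+1))) (x k)
      rw [hG0] at hsb
      simp only [inner_zero_left] at hsb
      have hbnn := hbrφ (x (k+1)) (x k)
      have hrev : ‖x k - x (k+1)‖^2 = u k := by rw [huk, norm_sub_rev]
      rw [hrev] at hsb
      linarith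
    · have h := hx k (x k)
      have hbs := strong_bregman hscB (hφdiff (x k)) (x (k+1))
      have hbreg : μ₁/2 * u k ≤ bregman φ φ' (x (k+1)) (x k) := by
        simp only [bregman, huk]; linarith
      rw [hbreg_self] at h
      linarith
  -- dual update effect
  have hI2 : ∀ k, L (k+1) = augL A B f g α (x (k+1)) (y (k+1)) (p k) + (1/α) * w k := by
    intro k
    have hdp : p (k+1) - p k = α • (A (x (k+1)) - B (y (k+1))) := by
      rw [hp k]; abel
    have hwk : w k = α^2 * ‖A (x (k+1)) - B (y (k+1))‖^2 := by
      have : w k = ‖p (k+1) - p k‖^2 := rfl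
      rw [this, hdp, norm_smul, Real.norm_eq_abs, mul_pow, sq_abs]
    have hip : ⟪p (k+1), A (x (k+1)) - B (y (k+1))⟫_ℝ
        = ⟪p k, A (x (k+1)) - B (y (k+1))⟫_ℝ + α * ‖A (x (k+1)) - B (y (k+1))‖^2 := by
      rw [hp k, inner_add_left, real_inner_smul_left, real_inner_self_eq_norm_sq]
    have hLk : L (k+1) = augL A B f g α (x (k+1)) (y (k+1)) (p (k+1)) := rfl
    rw [hLk]
    simp only [augL]
    rw [hip, hwk]
    field_simp
    ring
  have hDESC : ∀ k, L (k+1) ≤ L k - μ₂/2 * v k - μ₁/2 * u k + (1/α) * w k := by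
    intro k; have := hY1 k; have := hX1 k; have := hI2 k; linarith
  -- lower bound for L
  obtain ⟨M, hM⟩ : ∃ M, ∀ k, M ≤ L k := by
    obtain ⟨R, hR⟩ := isBounded_iff_forall_norm_le.1 hbdd
    have hR' : ∀ k, ‖x k‖ ≤ R ∧ ‖y k‖ ≤ R ∧ ‖p k‖ ≤ R := by
      intro k
      have hz := hR _ (Set.mem_range_self k)
      have hyp : ‖((y k, p k) : EuclideanSpace ℝ (Fin n₂) × EuclideanSpace ℝ (Fin m))‖
          ≤ ‖((x k, y k, p k) : EuclideanSpace ℝ (Fin n₁) ×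
            EuclideanSpace ℝ (Fin n₂) × EuclideanSpace ℝ (Fin m))‖ :=
        norm_snd_le ((x k, y k, p k) : EuclideanSpace ℝ (Fin n₁) ×
            EuclideanSpace ℝ (Fin n₂) × EuclideanSpace ℝ (Fin m))
      exact ⟨le_trans (norm_fst_le ((x k, y k, p k) : EuclideanSpace ℝ (Fin n₁) ×
            EuclideanSpace ℝ (Fin n₂) × EuclideanSpace ℝ (Fin m))) hz,
        le_trans (le_trans (norm_fst_le ((y k, p k) : EuclideanSpace ℝ (Fin n₂) ×
          EuclideanSpace ℝ (Fin m))) hyp) hz,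
        le_trans (le_trans (norm_snd_le ((y k, p k) : EuclideanSpace ℝ (Fin n₂) ×
          EuclideanSpace ℝ (Fin m))) hyp) hz⟩
    have hR0 : 0 ≤ R := le_trans (norm_nonneg (x 0)) (hR' 0).1
    obtain ⟨cf, hcf⟩ : ∃ cf, ∀ z ∈ Metric.closedBall (0 : EuclideanSpace ℝ (Fin n₁)) R,
        cf ≤ f z := by
      obtain ⟨z0, _, hmin⟩ := (isCompact_closedBall (0 : EuclideanSpace ℝ (Fin n₁)) R)
        |>.exists_isMinOn ⟨0, Metric.mem_closedBall_self hR0⟩ hfC1.continuous.continuousOn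
      exact ⟨f z0, fun z hz => hmin hz⟩
    obtain ⟨cg, hcg⟩ := lsc_bddBelow_on_compact hg
      (isCompact_closedBall (0 : EuclideanSpace ℝ (Fin n₂)) R)
    refine ⟨cf + cg - R*(‖A‖*R + ‖B‖*R), fun k => ?_⟩
    have h1 : cf ≤ f (x k) := hcf _ (by
      rw [Metric.mem_closedBall, dist_zero_right]; exact (hR' k).1)
    have h2 : cg ≤ g (y k) := hcg _ (by
      rw [Metric.mem_closedBall, dist_zero_right]; exact (hR' k).2.1)
    have h3 : |⟪p k, A (x k) - B (y k)⟫_ℝ| ≤ R*(‖A‖*R + ‖B‖*R) := by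
      refine le_trans (abs_real_inner_le_norm _ _) ?_
      have hd : ‖A (x k) - B (y k)‖ ≤ ‖A‖*R + ‖B‖*R := by
        refine le_trans (norm_sub_le _ _) ?_
        have hAn : ‖A (x k)‖ ≤ ‖A‖ * R :=
          le_trans (A.le_opNorm _) (mul_le_mul_of_nonneg_left (hR' k).1 (norm_nonneg _))
        have hBn : ‖B (y k)‖ ≤ ‖B‖ * R :=
          le_trans (B.le_opNorm _) (mul_le_mul_of_nonneg_left (hR' k).2.1 (norm_nonneg _))
        linarith
      have hd0 : 0 ≤ ‖A‖*R + ‖B‖*R := le_trans (norm_nonneg _) hd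
      exact mul_le_mul (hR' k).2.2 hd (norm_nonneg _) hR0
    have h4 : 0 ≤ α/2 * ‖A (x k) - B (y k)‖^2 := by positivity
    have hLk : L k = f (x k) + g (y k) + ⟪p k, A (x k) - B (y k)⟫_ℝ
        + α/2 * ‖A (x k) - B (y k)‖^2 := rfl
    rw [hLk]
    have h5 := abs_le.1 h3
    linarith [h5.1]
  -- Lyapunov function
  set c : ℝ := 2/(α*μ₀) with hc
  set a : ℝ := (ℓf+ℓφ)^2 with ha
  set b : ℝ := ℓφ^2 with hb
  have hc0 : 0 < c := by rw [hc]; positivity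
  have ha0 : 0 ≤ a := sq_nonneg _
  have hb0 : 0 ≤ b := sq_nonneg _
  set Φ : ℕ → ℝ := fun k => L (k+1) + c*b*u k with hΦdef
  set δ : ℝ := min (μ₂/2) (μ₁/2 - c*a - c*b) with hδ
  have hδ0 : 0 < δ := by
    have h4 : 4*(a+b) < α*(μ₁*μ₀) := by
      have := (div_lt_iff₀ (mul_pos hμ₁ hμ₀)).1 hαbig
      linarith
    rw [hδ]
    apply lt_min (by linarith)
    rw [hc]
    have hpos : 0 < α*μ₀ := mul_pos hα hμ₀
    rw [sub_sub, sub_pos]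
    have heq : 2/(α*μ₀)*a + 2/(α*μ₀)*b = (2*(a+b))/(α*μ₀) := by
      field_simp
    rw [heq, div_lt_iff₀ hpos]
    nlinarith [h4]
  have hΦstep : ∀ k, Φ (k+1) + δ*(u (k+1) + v (k+1)) ≤ Φ k := by
    intro k
    have hD := hDESC (k+1)
    have hw' : (1/α) * w (k+1) ≤ c*a*u (k+1) + c*b*u k := by
      have hnn : (0:ℝ) ≤ 1/(α*μ₀) := by positivity
      have h2 := mul_le_mul_of_nonneg_left (hI3 k) hnn
      have e1 : 1/(α*μ₀) * (μ₀ * w (k+1)) = (1/α) * w (k+1) := by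
        field_simp
      have e2 : 1/(α*μ₀) * (2*a*u (k+1) + 2*b*u k) = c*a*u (k+1) + c*b*u k := by
        rw [hc]; field_simp
      rw [← e1, ← e2]
      calc 1/(α*μ₀) * (μ₀ * w (k+1)) ≤ 1/(α*μ₀) * (2*a * u (k+1) + 2*b * u k) := h2
        _ = 1/(α*μ₀) * (2*a*u (k+1) + 2*b*u k) := by ring
    have hδ1 : δ ≤ μ₂/2 := min_le_left _ _
    have hδ2 : δ ≤ μ₁/2 - c*a - c*b := min_le_right _ _
    have m1 := mul_le_mul_of_nonneg_right hδ2 (hu0 (k+1))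
    have m2 := mul_le_mul_of_nonneg_right hδ1 (hv0 (k+1))
    have hΦ1 : Φ (k+1) = L (k+2) + c*b*u (k+1) := rfl
    have hΦ0 : Φ k = L (k+1) + c*b*u k := rfl
    rw [hΦ1, hΦ0]
    nlinarith [hD, hw', m1, m2]
  have hΦLB : ∀ k, M ≤ Φ k := fun k => le_trans (hM (k+1))
    (le_add_of_nonneg_right (by positivity))
  -- summability
  have hsumuv : Summable (fun k => u (k+1) + v (k+1)) := by
    apply summable_of_sum_range_le (c := (Φ 0 - M)/δ)
      (fun n => add_nonneg (hu0 _) (hv0 _))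
    intro n
    rw [le_div_iff₀ hδ0]
    have htel : ∑ k ∈ Finset.range n, (Φ k - Φ (k+1)) = Φ 0 - Φ n :=
      Finset.sum_range_sub' Φ n
    have hle : ∑ k ∈ Finset.range n, (u (k+1) + v (k+1)) * δ
        ≤ ∑ k ∈ Finset.range n, (Φ k - Φ (k+1)) := by
      apply Finset.sum_le_sum
      intro i _
      have := hΦstep i
      nlinarith [this]
    have := hΦLB n
    calc (∑ k ∈ Finset.range n, (u (k+1) + v (k+1))) * δ
        = ∑ k ∈ Finset.range n, (u (k+1) + v (k+1)) * δ := by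
          rw [Finset.sum_mul]
      _ ≤ Φ 0 - Φ n := by rw [← htel]; exact hle
      _ ≤ Φ 0 - M := by linarith
  have hsumuv' : Summable (fun k => u k + v k) := (summable_nat_add_iff 1).1 hsumuv
  have hsumu : Summable u :=
    hsumuv'.of_nonneg_of_le hu0 (fun k => le_add_of_nonneg_right (hv0 k))
  have hsumv : Summable v :=
    hsumuv'.of_nonneg_of_le hv0 (fun k => le_add_of_nonneg_left (hu0 k))
  have hsumw : Summable w := by
    have hs1 : Summable (fun k => u (k+1)) := (summable_nat_add_iff 1).2 hsumu
    have hcomp : Summable (fun k => (2/μ₀)*a*u (k+1) + (2/μ₀)*b*u k) :=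
      ((hs1.mul_left _).add (hsumu.mul_left _))
    have hle : ∀ k, w (k+1) ≤ (2/μ₀)*a*u (k+1) + (2/μ₀)*b*u k := by
      intro k
      have h2 := mul_le_mul_of_nonneg_left (hI3 k) (le_of_lt (inv_pos.2 hμ₀))
      have e1 : μ₀⁻¹ * (μ₀ * w (k+1)) = w (k+1) := by field_simp
      have e2 : μ₀⁻¹ * (2*a*u (k+1) + 2*b*u k)
          = (2/μ₀)*a*u (k+1) + (2/μ₀)*b*u k := by field_simp
      rw [← e1, ← e2]
      calc μ₀⁻¹ * (μ₀ * w (k+1)) ≤ μ₀⁻¹ * (2*a * u (k+1) + 2*b * u k) := h2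
        _ = μ₀⁻¹ * (2*a*u (k+1) + 2*b*u k) := by ring
    have hw1 : Summable (fun k => w (k+1)) :=
      hcomp.of_nonneg_of_le (fun k => hw0 _) hle
    exact (summable_nat_add_iff 1).1 hw1
  -- conclusion
  have hkey : ∀ k, ‖((x k, y k, p k) : EuclideanSpace ℝ (Fin n₁) ×
      EuclideanSpace ℝ (Fin n₂) × EuclideanSpace ℝ (Fin m))
      - (x (k + 1), y (k + 1), p (k + 1))‖ ^ 2 ≤ u k + v k + w k := by
    intro k
    have h1 : ((x k, y k, p k) : EuclideanSpace ℝ (Fin n₁) ×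
        EuclideanSpace ℝ (Fin n₂) × EuclideanSpace ℝ (Fin m))
        - (x (k + 1), y (k + 1), p (k + 1))
        = (x k - x (k+1), y k - y (k+1), p k - p (k+1)) := rfl
    rw [h1]
    have hn : ‖((x k - x (k+1), y k - y (k+1), p k - p (k+1)) :
        EuclideanSpace ℝ (Fin n₁) × EuclideanSpace ℝ (Fin n₂) × EuclideanSpace ℝ (Fin m))‖
        = max ‖x k - x (k+1)‖ (max ‖y k - y (k+1)‖ ‖p k - p (k+1)‖) := rfl
    rw [hn]
    have e1 : ‖x k - x (k+1)‖^2 = u k := by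
      have : u k = ‖x (k+1) - x k‖^2 := rfl
      rw [this, norm_sub_rev]
    have e2 : ‖y k - y (k+1)‖^2 = v k := by
      have : v k = ‖y (k+1) - y k‖^2 := rfl
      rw [this, norm_sub_rev]
    have e3 : ‖p k - p (k+1)‖^2 = w k := by
      have : w k = ‖p (k+1) - p k‖^2 := rfl
      rw [this, norm_sub_rev]
    rw [← e1, ← e2, ← e3]
    rcases le_total ‖x k - x (k+1)‖ (max ‖y k - y (k+1)‖ ‖p k - p (k+1)‖) with h | h
    · rw [max_eq_right h]
      rcases le_total ‖y k - y (k+1)‖ ‖p k - p (k+1)‖ with h' | h'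
      · rw [max_eq_right h']
        nlinarith [sq_nonneg ‖x k - x (k+1)‖, sq_nonneg ‖y k - y (k+1)‖]
      · rw [max_eq_left h']
        nlinarith [sq_nonneg ‖x k - x (k+1)‖, sq_nonneg ‖p k - p (k+1)‖]
    · rw [max_eq_left h]
      nlinarith [sq_nonneg ‖y k - y (k+1)‖, sq_nonneg ‖p k - p (k+1)‖]
  have hsumz : Summable (fun k => ‖((x k, y k, p k) : EuclideanSpace ℝ (Fin n₁) ×
      EuclideanSpace ℝ (Fin n₂) × EuclideanSpace ℝ (Fin m))
      - (x (k + 1), y (k + 1), p (k + 1))‖ ^ 2) := by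
    apply Summable.of_nonneg_of_le (fun k => sq_nonneg _) hkey
    exact ((hsumu.add hsumv).add hsumw)
  refine ⟨hsumz, ?_⟩
  have h0 := hsumz.tendsto_atTop_zero
  have heq : (fun k => ‖((x k, y k, p k) : EuclideanSpace ℝ (Fin n₁) ×
      EuclideanSpace ℝ (Fin n₂) × EuclideanSpace ℝ (Fin m))
      - (x (k + 1), y (k + 1), p (k + 1))‖)
      = fun k => Real.sqrt (‖((x k, y k, p k) : EuclideanSpace ℝ (Fin n₁) ×
      EuclideanSpace ℝ (Fin n₂) × EuclideanSpace ℝ (Fin m))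
      - (x (k + 1), y (k + 1), p (k + 1))‖ ^ 2) := by
    funext k; rw [Real.sqrt_sq (norm_nonneg _)]
  rw [heq]
  have h1 := (Real.continuous_sqrt.tendsto 0).comp h0
  rw [Real.sqrt_zero] at h1
  exact h1
end

section
/- Suppose ψ : ℝ^{n₂} → ℝ is differentiable and μ₂-strongly convex (μ₂ > 0), and y^{k+1} is a global minimizer of y ↦ L_α(x^k, y, p^k) + Δ_ψ(y, y^k) over ℝ^{n₂}. Then L_α(x^k, y^{k+1}, p^k) ≤ L_α(x^k, y^k, p^k) − (μ₂/2)‖y^{k+1} − y^k‖². -/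
open scoped InnerProductSpace


lemma convexOn_grad_ineq {n : ℕ} {φ : EuclideanSpace ℝ (Fin n) → ℝ}
    (hc : ConvexOn ℝ Set.univ φ) {v gv : EuclideanSpace ℝ (Fin n)}
    (hg : HasGradientAt φ gv v) (u : EuclideanSpace ℝ (Fin n)) :
    φ v + ⟪gv, u - v⟫_ℝ ≤ φ u := by
  set F : ℝ → ℝ := fun t => φ (t • (u - v) + v) with hF
  have hFc : ConvexOn ℝ Set.univ F := by
    have h := hc.comp_affineMap (AffineMap.lineMap v u)
    have : (AffineMap.lineMap v u : ℝ → _) ⁻¹' Set.univ = Set.univ := Set.preimage_univ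
    rw [this] at h
    have heq : F = φ ∘ (AffineMap.lineMap v u) := by
      funext t
      simp [F, AffineMap.lineMap_apply_module']
    rwa [heq]
  have hline : HasDerivAt (fun t : ℝ => t • (u - v) + v) (u - v) 0 := by
    simpa using ((hasDerivAt_id (0 : ℝ)).smul_const (u - v)).add_const v
  have hfd : HasFDerivAt φ (InnerProductSpace.toDual ℝ _ gv) v :=
    hasGradientAt_iff_hasFDerivAt.mp hg
  have hFd : HasDerivAt F ⟪gv, u - v⟫_ℝ 0 := by
    have hfd' : HasFDerivAt φ (InnerProductSpace.toDual ℝ _ gv) ((0:ℝ) • (u - v) + v) := by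
      simpa using hfd
    have := hfd'.comp_hasDerivAt (x := (0 : ℝ)) hline
    simp [InnerProductSpace.toDual_apply_apply] at this
    exact this
  have hs := hFc.le_slope_of_hasDerivAt (Set.mem_univ 0) (Set.mem_univ 1) zero_lt_one hFd
  have : slope F 0 1 = φ u - φ v := by
    simp [slope_def_field, F]
  linarith [hs.trans_eq this]

theorem badmm_y_descent {n₁ n₂ m : ℕ} (hn₁ : 0 < n₁) (hn₂ : 0 < n₂) (hm : 0 < m)
    (A : EuclideanSpace ℝ (Fin n₁) →L[ℝ] EuclideanSpace ℝ (Fin m))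
    (B : EuclideanSpace ℝ (Fin n₂) →L[ℝ] EuclideanSpace ℝ (Fin m))
    (f : EuclideanSpace ℝ (Fin n₁) → ℝ) (g : EuclideanSpace ℝ (Fin n₂) → ℝ)
    (α : ℝ) (hα : 0 < α)
    (ψ : EuclideanSpace ℝ (Fin n₂) → ℝ)
    (ψ' : EuclideanSpace ℝ (Fin n₂) → EuclideanSpace ℝ (Fin n₂))
    (hψdiff : ∀ u, HasGradientAt ψ (ψ' u) u)
    (μ₂ : ℝ) (hμ₂ : 0 < μ₂)
    (hψsc : ConvexOn ℝ Set.univ (fun z => ψ z - μ₂ / 2 * ‖z‖ ^ 2))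
    (xk : EuclideanSpace ℝ (Fin n₁)) (yk y1 : EuclideanSpace ℝ (Fin n₂))
    (pk : EuclideanSpace ℝ (Fin m))
    (hmin : ∀ y : EuclideanSpace ℝ (Fin n₂),
      augL A B f g α xk y1 pk + bregman ψ ψ' y1 yk ≤
        augL A B f g α xk y pk + bregman ψ ψ' y yk) :
    augL A B f g α xk y1 pk ≤
      augL A B f g α xk yk pk - μ₂ / 2 * ‖y1 - yk‖ ^ 2 := by
  have h0 := hmin yk
  have hb0 : bregman ψ ψ' yk yk = 0 := by simp [bregman]
  have hgrad : HasGradientAt (fun z => ψ z - μ₂ / 2 * ‖z‖ ^ 2) (ψ' yk - μ₂ • yk) yk := by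
    rw [hasGradientAt_iff_hasFDerivAt]
    have h1 : HasFDerivAt ψ (InnerProductSpace.toDual ℝ _ (ψ' yk)) yk :=
      hasGradientAt_iff_hasFDerivAt.mp (hψdiff yk)
    have h2 : HasFDerivAt (fun z : EuclideanSpace ℝ (Fin n₂) => ‖z‖ ^ 2)
        (2 • (innerSL ℝ yk)) yk := (hasStrictFDerivAt_norm_sq yk).hasFDerivAt
    have h3 := h1.sub (h2.const_mul (μ₂ / 2))
    refine h3.congr_fderiv ?_
    ext w
    simp only [InnerProductSpace.toDual_apply_apply, ContinuousLinearMap.coe_sub', Pi.sub_apply,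
      ContinuousLinearMap.coe_smul', Pi.smul_apply, innerSL_apply_apply, smul_eq_mul,
      inner_sub_left, real_inner_smul_left]
    ring
  have hφineq := convexOn_grad_ineq hψsc hgrad y1
  have hkey : μ₂ / 2 * ‖y1 - yk‖ ^ 2 ≤ bregman ψ ψ' y1 yk := by
    have hexp : ‖y1 - yk‖ ^ 2 = ‖y1‖ ^ 2 - 2 * ⟪y1, yk⟫_ℝ + ‖yk‖ ^ 2 := by
      rw [@norm_sub_sq_real]
    have hi : ⟪ψ' yk - μ₂ • yk, y1 - yk⟫_ℝ
        = ⟪ψ' yk, y1 - yk⟫_ℝ - μ₂ * (⟪yk, y1⟫_ℝ - ‖yk‖ ^ 2) := by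
      simp only [inner_sub_left, inner_sub_right, real_inner_smul_left,
        real_inner_self_eq_norm_sq]
      ring
    rw [hi] at hφineq
    have hcomm : ⟪yk, y1⟫_ℝ = ⟪y1, yk⟫_ℝ := real_inner_comm _ _
    simp only [bregman]
    nlinarith [hφineq, hexp, hcomm]
  linarith
end

section
/- (Telescoping lemma in the proof of Theorem III.4) Let (a_k)_{k≥0} be a sequence of nonnegative reals, let (d_k)_{k≥0} be a nonincreasing sequence of nonnegative reals, and let k₁ ≥ 3 be such that 4a_k ≤ a_{k−1} + a_{k−2} + a_{k−3} + (d_k − d_{k+1}) for all k ≥ k₁. Then ∑_{k=0}^∞ a_k < ∞. -/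
theorem telescoping_lemma_III_4
    (a d : ℕ → ℝ) (ha : ∀ k, 0 ≤ a k) (hd : ∀ k, 0 ≤ d k)
    (hdmono : ∀ k, d (k + 1) ≤ d k)
    (k₁ : ℕ) (hk₁ : 3 ≤ k₁)
    (hrec : ∀ k, k₁ ≤ k →
      4 * a k ≤ a (k - 1) + a (k - 2) + a (k - 3) + (d k - d (k + 1))) :
    Summable a := by
  set Φ : ℕ → ℝ := fun k => 3 * a (k - 1) + 2 * a (k - 2) + a (k - 3) + d k with hΦ
  have hΦnn : ∀ k, 0 ≤ Φ k := fun k => by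
    have := ha (k-1); have := ha (k-2); have := ha (k-3); have := hd k
    simp only [hΦ]; linarith
  have hstep : ∀ k, k₁ ≤ k → a k + Φ (k + 1) ≤ Φ k := by
    intro k hk
    have h1 : k + 1 - 1 = k := by omega
    have h2 : k + 1 - 2 = k - 1 := by omega
    have h3 : k + 1 - 3 = k - 2 := by omega
    have := hrec k hk
    simp only [hΦ, h1, h2, h3]
    linarith
  have key : ∀ n, (∑ k ∈ Finset.Ico k₁ (k₁ + n), a k) + Φ (k₁ + n) ≤ Φ k₁ := by
    intro n
    induction n with
    | zero => simp
    | succ n ih =>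
      rw [show k₁ + (n+1) = (k₁ + n) + 1 by ring,
        Finset.sum_Ico_succ_top (by omega : k₁ ≤ k₁ + n)]
      have := hstep (k₁ + n) (by omega)
      linarith
  apply summable_of_sum_range_le (c := (∑ k ∈ Finset.range k₁, a k) + Φ k₁) ha
  intro n
  rcases le_or_gt n k₁ with h | h
  · have h1 : (∑ k ∈ Finset.range n, a k) ≤ ∑ k ∈ Finset.range k₁, a k :=
      Finset.sum_le_sum_of_subset_of_nonneg (Finset.range_subset_range.2 h)
        (fun i _ _ => ha i)
    have := hΦnn k₁; linarith
  · obtain ⟨m, rfl⟩ : ∃ m, n = k₁ + m := ⟨n - k₁, by omega⟩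
    rw [Finset.range_eq_Ico, ← Finset.sum_Ico_consecutive _ (Nat.zero_le k₁) (by omega : k₁ ≤ k₁ + m), ← Finset.range_eq_Ico]
    have := key m
    have := hΦnn (k₁ + m)
    linarith
end

section
/- (Telescoping lemma in the proof of Theorem III.8) Let (a_k)_{k≥0} and (b_k)_{k≥0} be sequences of nonnegative reals, let (d_k)_{k≥0} be a nonincreasing sequence of nonnegative reals, and let k₁ ≥ 2 be such that 3(a_k + b_k) ≤ a_{k−1} + b_{k−1} + a_{k−2} + (d_k − d_{k+1}) for all k ≥ k₁. Then ∑_{k=0}^∞ (a_k + b_k) < ∞. -/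
theorem telescoping_lemma_III_8
    (a b d : ℕ → ℝ) (ha : ∀ k, 0 ≤ a k) (hb : ∀ k, 0 ≤ b k) (hd : ∀ k, 0 ≤ d k)
    (hdmono : ∀ k, d (k + 1) ≤ d k)
    (k₁ : ℕ) (hk₁ : 2 ≤ k₁)
    (hrec : ∀ k, k₁ ≤ k →
      3 * (a k + b k) ≤ a (k - 1) + b (k - 1) + a (k - 2) + (d k - d (k + 1))) :
    Summable (fun k => a k + b k) := by
  obtain ⟨j, rfl⟩ : ∃ j, k₁ = j + 2 := ⟨k₁ - 2, by omega⟩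
  set c : ℕ → ℝ := fun k => a k + b k with hc
  have hcnn : ∀ k, 0 ≤ c k := fun k => add_nonneg (ha k) (hb k)
  set f : ℕ → ℝ := fun n => ∑ k ∈ Finset.Ico (j + 2) n, c k with hf
  have key : ∀ n, 3 * f (j + 2 + n) + 2 * c (j + n + 1) + c (j + n) ≤
      2 * f (j + 2 + n) + 2 * c (j + 1) + c j + (d (j + 2) - d (j + 2 + n)) := by
    intro n
    induction n with
    | zero =>
      simp [hf, Finset.Ico_self]
    | succ n ih =>
      have hm : j + 2 ≤ j + 2 + n := by omega
      have hstep : f (j + 2 + (n + 1)) = f (j + 2 + n) + c (j + 2 + n) := by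
        have : j + 2 + (n + 1) = (j + 2 + n) + 1 := by omega
        rw [this, hf]
        exact Finset.sum_Ico_succ_top hm _
      have hr := hrec (j + 2 + n) (by omega)
      have e1 : j + 2 + n - 1 = j + n + 1 := by omega
      have e2 : j + 2 + n - 2 = j + n := by omega
      rw [e1, e2] at hr
      have e3 : j + 2 + (n + 1) = j + 2 + n + 1 := by omega
      have e4 : j + (n + 1) + 1 = j + 2 + n := by omega
      have e5 : j + (n + 1) = j + n + 1 := by omega
      rw [hstep, e3, e4, e5]
      have hb2 : 0 ≤ b (j + n) := hb _
      simp only [hc] at *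
      linarith
  have hbound : ∀ n, f n ≤ 2 * c (j + 1) + c j + d (j + 2) := by
    intro n
    rcases le_or_gt n (j + 2) with h | h
    · have : f n = 0 := by
        rw [hf]
        exact Finset.sum_eq_zero (fun k hk => by
          simp only [Finset.mem_Ico] at hk; omega)
      rw [this]
      have := hcnn (j + 1); have := hcnn j; have := hd (j + 2)
      linarith
    · obtain ⟨m, rfl⟩ : ∃ m, n = j + 2 + m := ⟨n - (j + 2), by omega⟩
      have := key m
      have := hcnn (j + m + 1); have := hcnn (j + m); have := hd (j + 2 + m)
      linarith
  apply summable_of_sum_range_le (c := ∑ k ∈ Finset.range (j + 2), c k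
      + (2 * c (j + 1) + c j + d (j + 2))) hcnn
  intro n
  have hsub : Finset.range n ⊆ Finset.range (j + 2 + n) := by
    apply Finset.range_subset_range.2; omega
  calc ∑ i ∈ Finset.range n, c i ≤ ∑ i ∈ Finset.range (j + 2 + n), c i :=
        Finset.sum_le_sum_of_subset_of_nonneg hsub (fun i _ _ => hcnn i)
    _ = ∑ k ∈ Finset.range (j + 2), c k + f (j + 2 + n) := by
        simp only [hf, Finset.range_eq_Ico]
        exact (Finset.sum_Ico_consecutive _ (by omega) (by omega)).symm
    _ ≤ _ := by have := hbound (j + 2 + n); linarith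
end

section
/- (Smooth part of the stationarity of cluster points, from Lemma III.2) Let Assumption 1 hold and let (x^k), (y^k), (p^k) be BADMM iterates such that z^k := (x^k, y^k, p^k) is bounded. If a subsequence (x^{k_j}, y^{k_j}, p^{k_j}) converges to (x*, y*, p*), then ∇f(x*) + A^⊤p* = 0 and Ax* = By*. -/
open scoped InnerProductSpace

open Set Filter Topology ContinuousLinearMap in
private lemma grad_ineq' {n : ℕ} {h : EuclideanSpace ℝ (Fin n) → ℝ}
    {h' : EuclideanSpace ℝ (Fin n) → EuclideanSpace ℝ (Fin n)}
    (hc : ConvexOn ℝ Set.univ h) (hd : ∀ u, HasGradientAt h (h' u) u)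
    (u v : EuclideanSpace ℝ (Fin n)) :
    h v + ⟪h' v, u - v⟫_ℝ ≤ h u := by
  set d := u - v with hd_def
  set q : ℝ → ℝ := fun t => h (v + t • d) with hq_def
  have hq : ∀ t : ℝ, HasDerivAt q ⟪h' (v + t • d), d⟫_ℝ t := by
    intro t
    have h1 : HasDerivAt (fun t : ℝ => v + t • d) d t := by
      simpa using ((hasDerivAt_id t).smul_const d).const_add v
    have h2 : HasFDerivAt h (InnerProductSpace.toDual ℝ _ (h' (v + t • d))) (v + t • d) :=
      hd (v + t • d)
    have h3 := h2.comp_hasDerivAt t h1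
    simp only [InnerProductSpace.toDual_apply_apply] at h3
    exact h3
  have hder : HasDerivAt q ⟪h' v, d⟫_ℝ 0 := by simpa using hq 0
  have hs := hasDerivAt_iff_tendsto_slope.mp hder
  have hs' : Tendsto (slope q 0) (𝓝[>] (0:ℝ)) (𝓝 ⟪h' v, d⟫_ℝ) :=
    hs.mono_left (nhdsWithin_mono _ (fun t ht => ne_of_gt ht))
  have hq0 : q 0 = h v := by simp [hq_def]
  have hq1 : q 1 = h u := by simp [hq_def, hd_def]
  have key : ⟪h' v, d⟫_ℝ ≤ h u - h v := by
    refine le_of_tendsto hs' ?_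
    filter_upwards [Ioc_mem_nhdsGT_of_mem (by constructor <;> norm_num : (0:ℝ) ∈ Ico 0 1)]
      with t ht
    have ht0 : 0 < t := ht.1
    have hconv := hc.2 (mem_univ v) (mem_univ u) (by linarith [ht.2] : (0:ℝ) ≤ 1 - t)
      (le_of_lt ht0) (by ring)
    have heq : (1 - t) • v + t • u = v + t • d := by
      rw [hd_def]; module
    rw [heq] at hconv
    have hqt : q t ≤ (1 - t) * h v + t * h u := by
      simpa [hq_def, smul_eq_mul] using hconv
    rw [slope_def_field, hq0, sub_zero, div_le_iff₀ ht0]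
    nlinarith
  linarith

open Set Filter Topology ContinuousLinearMap in
private lemma gradAdd' {n : ℕ} {f g : EuclideanSpace ℝ (Fin n) → ℝ}
    {a b x : EuclideanSpace ℝ (Fin n)}
    (hf : HasGradientAt f a x) (hg : HasGradientAt g b x) :
    HasGradientAt (fun y => f y + g y) (a + b) x := by
  rw [hasGradientAt_iff_hasFDerivAt] at *
  have h3 := hf.add hg
  rw [map_add]
  exact h3

open Set Filter Topology ContinuousLinearMap in
private lemma gradSub' {n : ℕ} {f g : EuclideanSpace ℝ (Fin n) → ℝ}
    {a b x : EuclideanSpace ℝ (Fin n)}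
    (hf : HasGradientAt f a x) (hg : HasGradientAt g b x) :
    HasGradientAt (fun y => f y - g y) (a - b) x := by
  rw [hasGradientAt_iff_hasFDerivAt] at *
  have h3 := hf.sub hg
  rw [map_sub]
  exact h3

open Set Filter Topology ContinuousLinearMap in
private lemma gradConstMul' {n : ℕ} {f : EuclideanSpace ℝ (Fin n) → ℝ}
    {a x : EuclideanSpace ℝ (Fin n)} (c : ℝ)
    (hf : HasGradientAt f a x) :
    HasGradientAt (fun y => c * f y) (c • a) x := by
  rw [hasGradientAt_iff_hasFDerivAt] at *
  simpa [map_smul] using hf.const_mul c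

open Set Filter Topology ContinuousLinearMap in
private lemma gradInnerComp' {n n' : ℕ}
    (A : EuclideanSpace ℝ (Fin n) →L[ℝ] EuclideanSpace ℝ (Fin n'))
    (p₀ b : EuclideanSpace ℝ (Fin n')) (x : EuclideanSpace ℝ (Fin n)) :
    HasGradientAt (fun x => ⟪p₀, A x - b⟫_ℝ) (adjoint A p₀) x := by
  have h1 : HasFDerivAt (fun x => ⟪p₀, A x - b⟫_ℝ) ((innerSL ℝ p₀).comp A) x := by
    have h2 := ((innerSL ℝ p₀).comp A).hasFDerivAt (x := x) |>.sub_const ⟪p₀, b⟫_ℝ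
    simpa only [ContinuousLinearMap.comp_apply, innerSL_apply_apply, ← inner_sub_right] using h2
  rw [hasGradientAt_iff_hasFDerivAt]
  refine h1.congr_fderiv (Eq.symm ?_)
  ext z
  simp [InnerProductSpace.toDual_apply_apply, ContinuousLinearMap.adjoint_inner_left]

open Set Filter Topology ContinuousLinearMap in
private lemma gradNormSqComp' {n n' : ℕ}
    (A : EuclideanSpace ℝ (Fin n) →L[ℝ] EuclideanSpace ℝ (Fin n'))
    (b : EuclideanSpace ℝ (Fin n')) (x : EuclideanSpace ℝ (Fin n)) :
    HasGradientAt (fun x => ‖A x - b‖ ^ 2) ((2:ℝ) • adjoint A (A x - b)) x := by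
  have hA : HasFDerivAt (fun x => A x - b) (A : _ →L[ℝ] _) x := A.hasFDerivAt.sub_const b
  have hi := hA.inner ℝ hA
  simp only [real_inner_self_eq_norm_sq] at hi
  rw [hasGradientAt_iff_hasFDerivAt]
  refine hi.congr_fderiv (Eq.symm ?_)
  ext z
  simp only [InnerProductSpace.toDual_apply_apply, ContinuousLinearMap.comp_apply,
    ContinuousLinearMap.prod_apply, fderivInnerCLM_apply, real_inner_smul_left,
    ContinuousLinearMap.adjoint_inner_left]
  rw [real_inner_comm (A z)]
  ring

open Set Filter Topology ContinuousLinearMap in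
private lemma gradInnerRight' {n : ℕ} (w x₀ x : EuclideanSpace ℝ (Fin n)) :
    HasGradientAt (fun x => ⟪w, x - x₀⟫_ℝ) w x := by
  have := gradInnerComp' (ContinuousLinearMap.id ℝ (EuclideanSpace ℝ (Fin n))) w x₀ x
  simpa [ContinuousLinearMap.adjoint_id] using this

open Set Filter Topology ContinuousLinearMap in
private lemma gradNormSq' {n : ℕ} (c : ℝ) (x : EuclideanSpace ℝ (Fin n)) :
    HasGradientAt (fun x => c / 2 * ‖x‖ ^ 2) (c • x) x := by
  have := gradConstMul' (c / 2)
    (gradNormSqComp' (ContinuousLinearMap.id ℝ (EuclideanSpace ℝ (Fin n))) 0 x)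
  have he : (c / 2) • ((2:ℝ) • x) = c • x := by
    rw [smul_smul]; norm_num
  simpa [he, ContinuousLinearMap.adjoint_id] using this

open Set Filter Topology ContinuousLinearMap in
private lemma strong_grad_ineq' {n : ℕ} {μ : ℝ} {h : EuclideanSpace ℝ (Fin n) → ℝ}
    {h' : EuclideanSpace ℝ (Fin n) → EuclideanSpace ℝ (Fin n)}
    (hc : ConvexOn ℝ Set.univ (fun x => h x - μ / 2 * ‖x‖ ^ 2))
    (hd : ∀ u, HasGradientAt h (h' u) u) (u v : EuclideanSpace ℝ (Fin n)) :
    h v + ⟪h' v, u - v⟫_ℝ + μ / 2 * ‖u - v‖ ^ 2 ≤ h u := by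
  have hd' : ∀ w, HasGradientAt (fun x => h x - μ / 2 * ‖x‖ ^ 2) (h' w - μ • w) w :=
    fun w => gradSub' (hd w) (gradNormSq' μ w)
  have := grad_ineq' hc hd' u v
  have hnorm : ‖u - v‖ ^ 2 = ‖u‖ ^ 2 - ‖v‖ ^ 2 - 2 * ⟪v, u - v⟫_ℝ := by
    have h1 : ‖u - v‖ ^ 2 = ‖u‖ ^ 2 - 2 * ⟪u, v⟫_ℝ + ‖v‖ ^ 2 := norm_sub_sq_real u v
    have h2 : ⟪v, u - v⟫_ℝ = ⟪v, u⟫_ℝ - ‖v‖ ^ 2 := by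
      rw [inner_sub_right, real_inner_self_eq_norm_sq]
    rw [h1, h2, real_inner_comm v u]; ring
  rw [inner_sub_left, real_inner_smul_left] at this
  have h3 : μ / 2 * ‖u - v‖ ^ 2
      = μ / 2 * ‖u‖ ^ 2 - μ / 2 * ‖v‖ ^ 2 - μ * ⟪v, u - v⟫_ℝ := by rw [hnorm]; ring
  linarith [this, h3]

open Set Filter Topology ContinuousLinearMap in
private lemma min_grad_zero' {n : ℕ} {F : EuclideanSpace ℝ (Fin n) → ℝ}
    {G v : EuclideanSpace ℝ (Fin n)}
    (hd : HasGradientAt F G v) (hmin : ∀ w, F v ≤ F w) : G = 0 := by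
  have hloc : IsLocalMin F v := Filter.Eventually.of_forall hmin
  have h0 : InnerProductSpace.toDual ℝ (EuclideanSpace ℝ (Fin n)) G = 0 :=
    hloc.hasFDerivAt_eq_zero hd
  have := congrArg (InnerProductSpace.toDual ℝ (EuclideanSpace ℝ (Fin n))).symm h0
  simpa using this

open Set Filter Topology ContinuousLinearMap in
private lemma lsc_bddBelow' {n : ℕ} {g : EuclideanSpace ℝ (Fin n) → ℝ}
    (hg : LowerSemicontinuous g)
    {s : Set (EuclideanSpace ℝ (Fin n))} (hs : IsCompact s) :
    ∃ M, ∀ x ∈ s, M ≤ g x := by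
  have hU : ∀ x ∈ s, {y | g x - 1 < g y} ∈ 𝓝 x := fun x _ => hg x (g x - 1) (by linarith)
  obtain ⟨t, -, hcov⟩ := hs.elim_nhds_subcover (fun x => {y | g x - 1 < g y}) hU
  rcases t.eq_empty_or_nonempty with rfl | hne
  · exact ⟨0, fun x hx => by simpa using hcov hx⟩
  · refine ⟨t.inf' hne (fun z => g z - 1), fun x hx => ?_⟩
    obtain ⟨z, hz, hxz⟩ := Set.mem_iUnion₂.mp (hcov hx)
    exact le_trans (Finset.inf'_le _ hz) (le_of_lt hxz)

open Set Filter Topology ContinuousLinearMap in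
private lemma bregman_self' {n : ℕ} {h : EuclideanSpace ℝ (Fin n) → ℝ} {h'}
    (u : EuclideanSpace ℝ (Fin n)) :
    bregman h h' u u = 0 := by simp [bregman]

open Set Filter Topology ContinuousLinearMap in
private lemma bregman_nonneg' {n : ℕ} {h : EuclideanSpace ℝ (Fin n) → ℝ} {h'}
    (hc : ConvexOn ℝ Set.univ h) (hd : ∀ u, HasGradientAt h (h' u) u)
    (u v : EuclideanSpace ℝ (Fin n)) : 0 ≤ bregman h h' u v := by
  have := grad_ineq' hc hd u v
  simp only [bregman]; linarith

open Set Filter Topology ContinuousLinearMap in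
private lemma bregman_convex' {n : ℕ} {h : EuclideanSpace ℝ (Fin n) → ℝ} {h'}
    (hc : ConvexOn ℝ Set.univ h) (v : EuclideanSpace ℝ (Fin n)) :
    ConvexOn ℝ Set.univ (fun u => bregman h h' u v) := by
  have haff : ConvexOn ℝ Set.univ (fun u : EuclideanSpace ℝ (Fin n) =>
      -h v - ⟪h' v, u - v⟫_ℝ) := by
    refine ⟨convex_univ, fun a _ b _ s t hs ht hst => le_of_eq ?_⟩
    simp only [inner_sub_right, inner_add_right, real_inner_smul_right, smul_eq_mul]
    have hts : t = 1 - s := by linarith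
    rw [hts]; ring
  have heq : (fun u => bregman h h' u v)
      = (h + fun u : EuclideanSpace ℝ (Fin n) => -h v - ⟪h' v, u - v⟫_ℝ) := by
    funext u
    simp only [bregman, Pi.add_apply]
    ring
  rw [heq]
  exact hc.add haff

open Set Filter Topology ContinuousLinearMap in
private lemma gradSubproblem' {n₁ n₂ m : ℕ}
    (A : EuclideanSpace ℝ (Fin n₁) →L[ℝ] EuclideanSpace ℝ (Fin m))
    (B : EuclideanSpace ℝ (Fin n₂) →L[ℝ] EuclideanSpace ℝ (Fin m))
    {f : EuclideanSpace ℝ (Fin n₁) → ℝ} (g : EuclideanSpace ℝ (Fin n₂) → ℝ) (α : ℝ)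
    {f' : EuclideanSpace ℝ (Fin n₁) → EuclideanSpace ℝ (Fin n₁)}
    {φ : EuclideanSpace ℝ (Fin n₁) → ℝ}
    {φ' : EuclideanSpace ℝ (Fin n₁) → EuclideanSpace ℝ (Fin n₁)}
    (hfgrad : ∀ u, HasGradientAt f (f' u) u) (hφdiff : ∀ u, HasGradientAt φ (φ' u) u)
    (y₀ : EuclideanSpace ℝ (Fin n₂)) (p₀ : EuclideanSpace ℝ (Fin m))
    (x₀ x : EuclideanSpace ℝ (Fin n₁)) :
    HasGradientAt (fun x' => augL A B f g α x' y₀ p₀ + bregman φ φ' x' x₀)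
      (f' x + adjoint A p₀ + α • adjoint A (A x - B y₀) + (φ' x - φ' x₀)) x := by
  have t1 := hfgrad x
  have t2 : HasGradientAt (fun _ : EuclideanSpace ℝ (Fin n₁) => g y₀) 0 x :=
    hasGradientAt_const x _
  have t3 := gradInnerComp' A p₀ (B y₀) x
  have t4 := gradConstMul' (α / 2) (gradNormSqComp' A (B y₀) x)
  have t5 := hφdiff x
  have t6 : HasGradientAt (fun _ : EuclideanSpace ℝ (Fin n₁) => φ x₀) 0 x :=
    hasGradientAt_const x _
  have t7 := gradInnerRight' (φ' x₀) x₀ x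
  have H := gradAdd' (gradAdd' (gradAdd' (gradAdd' t1 t2) t3) t4) (gradSub' (gradSub' t5 t6) t7)
  have hval : f' x + 0 + adjoint A p₀ + (α / 2) • (2:ℝ) • adjoint A (A x - B y₀)
      + (φ' x - 0 - φ' x₀)
      = f' x + adjoint A p₀ + α • adjoint A (A x - B y₀) + (φ' x - φ' x₀) := by
    rw [smul_smul]
    norm_num
  rw [hval] at H
  exact H


set_option maxHeartbeats 1000000 in
open Set Filter Topology ContinuousLinearMap in
theorem badmm_cluster_point_stationary
{n₁ n₂ m : ℕ} (hn₁ : 0 < n₁) (hn₂ : 0 < n₂) (hm : 0 < m)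
    (A : EuclideanSpace ℝ (Fin n₁) →L[ℝ] EuclideanSpace ℝ (Fin m))
    (B : EuclideanSpace ℝ (Fin n₂) →L[ℝ] EuclideanSpace ℝ (Fin m))
    (f : EuclideanSpace ℝ (Fin n₁) → ℝ) (g : EuclideanSpace ℝ (Fin n₂) → ℝ)
    (f' : EuclideanSpace ℝ (Fin n₁) → EuclideanSpace ℝ (Fin n₁))
    (hfC1 : ContDiff ℝ 1 f) (hfgrad : ∀ u, HasGradientAt f (f' u) u)
    (ℓf : ℝ) (hℓf : 0 ≤ ℓf) (hf' : ∀ u v, ‖f' u - f' v‖ ≤ ℓf * ‖u - v‖)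
    (hg : LowerSemicontinuous g)
    (φ : EuclideanSpace ℝ (Fin n₁) → ℝ)
    (φ' : EuclideanSpace ℝ (Fin n₁) → EuclideanSpace ℝ (Fin n₁))
    (hφconv : ConvexOn ℝ Set.univ φ) (hφdiff : ∀ u, HasGradientAt φ (φ' u) u)
    (ℓφ : ℝ) (hℓφ : 0 ≤ ℓφ) (hφ' : ∀ u v, ‖φ' u - φ' v‖ ≤ ℓφ * ‖u - v‖)
    (ψ : EuclideanSpace ℝ (Fin n₂) → ℝ)
    (ψ' : EuclideanSpace ℝ (Fin n₂) → EuclideanSpace ℝ (Fin n₂))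
    (hψconv : ConvexOn ℝ Set.univ ψ) (hψdiff : ∀ u, HasGradientAt ψ (ψ' u) u)
    (ℓψ : ℝ) (hℓψ : 0 ≤ ℓψ) (hψ' : ∀ u v, ‖ψ' u - ψ' v‖ ≤ ℓψ * ‖u - v‖)
    (α μ₀ : ℝ) (hα : 0 < α) (hμ₀ : 0 < μ₀)
    (hA : ∀ q : EuclideanSpace ℝ (Fin m),
      μ₀ * ‖q‖ ^ 2 ≤ ‖ContinuousLinearMap.adjoint A q‖ ^ 2)
    (μ₁ : ℝ) (hμ₁ : 0 < μ₁)
    (hsc : (∀ (y : EuclideanSpace ℝ (Fin n₂)) (p : EuclideanSpace ℝ (Fin m)),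
          ConvexOn ℝ Set.univ (fun x => augL A B f g α x y p - μ₁ / 2 * ‖x‖ ^ 2)) ∨
        ConvexOn ℝ Set.univ (fun x => φ x - μ₁ / 2 * ‖x‖ ^ 2))
    (hαbig : α > 4 * ((ℓf + ℓφ) ^ 2 + ℓφ ^ 2) / (μ₁ * μ₀))
    (x : ℕ → EuclideanSpace ℝ (Fin n₁)) (y : ℕ → EuclideanSpace ℝ (Fin n₂))
    (p : ℕ → EuclideanSpace ℝ (Fin m))
    (hy : ∀ k, ∀ y' : EuclideanSpace ℝ (Fin n₂),
      augL A B f g α (x k) (y (k + 1)) (p k) + bregman ψ ψ' (y (k + 1)) (y k) ≤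
        augL A B f g α (x k) y' (p k) + bregman ψ ψ' y' (y k))
    (hx : ∀ k, ∀ x' : EuclideanSpace ℝ (Fin n₁),
      augL A B f g α (x (k + 1)) (y (k + 1)) (p k) + bregman φ φ' (x (k + 1)) (x k) ≤
        augL A B f g α x' (y (k + 1)) (p k) + bregman φ φ' x' (x k))
    (hp : ∀ k, p (k + 1) = p k + α • (A (x (k + 1)) - B (y (k + 1))))
    (hB : Function.Injective B)
    (hbdd : Bornology.IsBounded (Set.range fun k => (x k, y k, p k)))
    (kj : ℕ → ℕ) (hkj : StrictMono kj)
    (xs : EuclideanSpace ℝ (Fin n₁)) (ys : EuclideanSpace ℝ (Fin n₂))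
    (ps : EuclideanSpace ℝ (Fin m))
    (hconv : Filter.Tendsto (fun j => (x (kj j), y (kj j), p (kj j)))
      Filter.atTop (nhds (xs, ys, ps))) :
    f' xs + ContinuousLinearMap.adjoint A ps = 0 ∧ A xs = B ys := by
  -- abbreviations
  set Lk : ℕ → ℝ := fun k => augL A B f g α (x k) (y k) (p k) with hLk_def
  set dx : ℕ → ℝ := fun k => ‖x (k + 1) - x k‖ with hdx_def
  set dp : ℕ → ℝ := fun k => ‖p (k + 1) - p k‖ with hdp_def
  -- gradient of the x-subproblem
  have hGrad : ∀ k x',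
      HasGradientAt (fun x' => augL A B f g α x' (y (k + 1)) (p k) + bregman φ φ' x' (x k))
        (f' x' + adjoint A (p k) + α • adjoint A (A x' - B (y (k + 1)))
          + (φ' x' - φ' (x k))) x' :=
    fun k x' => gradSubproblem' A B g α hfgrad hφdiff _ _ _ x'
  -- first order optimality at x-update
  have hopt : ∀ k, f' (x (k + 1)) + adjoint A (p k)
      + α • adjoint A (A (x (k + 1)) - B (y (k + 1))) + (φ' (x (k + 1)) - φ' (x k)) = 0 :=
    fun k => min_grad_zero' (hGrad k (x (k + 1))) (hx k)
  -- key stationarity identity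
  have hkey : ∀ k, f' (x (k + 1)) + adjoint A (p (k + 1))
      + (φ' (x (k + 1)) - φ' (x k)) = 0 := by
    intro k
    have h1 := hopt k
    rw [hp k, map_add, map_smul]
    rw [← h1]
    abel
  -- y-step descent
  have hY : ∀ k, augL A B f g α (x k) (y (k + 1)) (p k) ≤ Lk k := by
    intro k
    have h1 := hy k (y k)
    have h2 := bregman_nonneg' hψconv hψdiff (y (k + 1)) (y k)
    rw [bregman_self'] at h1
    simp only [hLk_def]
    linarith
  -- x-step descent with strong convexity
  have hX : ∀ k, augL A B f g α (x (k + 1)) (y (k + 1)) (p k) + μ₁ / 2 * dx k ^ 2 ≤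
      augL A B f g α (x k) (y (k + 1)) (p k) := by
    intro k
    have hmin := hx k (x k)
    rw [bregman_self'] at hmin
    have hdxk : dx k = ‖x k - x (k + 1)‖ := by rw [hdx_def, norm_sub_rev]
    rcases hsc with hsc1 | hsc2
    · -- augmented Lagrangian strongly convex in x
      have hconvF : ConvexOn ℝ Set.univ
          (fun x' => (augL A B f g α x' (y (k + 1)) (p k) + bregman φ φ' x' (x k))
            - μ₁ / 2 * ‖x'‖ ^ 2) := by
        have h1 := hsc1 (y (k + 1)) (p k)
        have h2 := bregman_convex' hφconv (x k) (h' := φ')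
        have heq : (fun x' => (augL A B f g α x' (y (k + 1)) (p k) + bregman φ φ' x' (x k))
              - μ₁ / 2 * ‖x'‖ ^ 2)
            = fun x' => (augL A B f g α x' (y (k + 1)) (p k) - μ₁ / 2 * ‖x'‖ ^ 2)
              + bregman φ φ' x' (x k) := by
          funext x'; ring
        rw [heq]
        exact h1.add h2
      have hsgi := strong_grad_ineq' hconvF (hGrad k) (x k) (x (k + 1))
      rw [hopt k] at hsgi
      rw [inner_zero_left] at hsgi
      have hb1 := bregman_nonneg' hφconv hφdiff (x (k + 1)) (x k)
      rw [bregman_self'] at hsgi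
      rw [hdxk]
      linarith
    · -- φ strongly convex
      have hsgi := strong_grad_ineq' hsc2 hφdiff (x (k + 1)) (x k)
      have hbreg : μ₁ / 2 * dx k ^ 2 ≤ bregman φ φ' (x (k + 1)) (x k) := by
        simp only [bregman, hdx_def]
        linarith
      linarith
  -- p-step ascent
  have hP : ∀ k, Lk (k + 1) = augL A B f g α (x (k + 1)) (y (k + 1)) (p k)
      + 1 / α * dp k ^ 2 := by
    intro k
    have hq : p (k + 1) - p k = α • (A (x (k + 1)) - B (y (k + 1))) := by
      rw [hp k]; abel
    have hdpk : dp k ^ 2 = α ^ 2 * ‖A (x (k + 1)) - B (y (k + 1))‖ ^ 2 := by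
      rw [hdp_def]
      simp only
      rw [hq, norm_smul, Real.norm_eq_abs, abs_of_pos hα, mul_pow]
    have h1 : ⟪p (k + 1), A (x (k + 1)) - B (y (k + 1))⟫_ℝ
        = ⟪p k, A (x (k + 1)) - B (y (k + 1))⟫_ℝ
          + α * ‖A (x (k + 1)) - B (y (k + 1))‖ ^ 2 := by
      rw [hp k, inner_add_left, real_inner_smul_left, real_inner_self_eq_norm_sq]
    simp only [hLk_def, augL]
    rw [h1, hdpk]
    field_simp
    ring
  -- combined descent
  have hdesc : ∀ k, Lk (k + 1) ≤ Lk k - μ₁ / 2 * dx k ^ 2 + 1 / α * dp k ^ 2 := by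
    intro k
    have h1 := hY k
    have h2 := hX k
    have h3 := hP k
    linarith
  -- dual step bound
  have hdpb : ∀ k, μ₀ * dp (k + 1) ^ 2 ≤
      2 * (ℓf + ℓφ) ^ 2 * dx (k + 1) ^ 2 + 2 * ℓφ ^ 2 * dx k ^ 2 := by
    intro k
    have h1 := hkey k
    have h2 := hkey (k + 1)
    have e1 : adjoint A (p (k + 1)) = -f' (x (k + 1)) - (φ' (x (k + 1)) - φ' (x k)) := by
      apply eq_of_sub_eq_zero
      rw [← h1]; abel
    have e2 : adjoint A (p (k + 1 + 1))
        = -f' (x (k + 1 + 1)) - (φ' (x (k + 1 + 1)) - φ' (x (k + 1))) := by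
      apply eq_of_sub_eq_zero
      rw [← h2]; abel
    have h3 : adjoint A (p (k + 1 + 1) - p (k + 1))
        = -(f' (x (k + 1 + 1)) - f' (x (k + 1))) - (φ' (x (k + 1 + 1)) - φ' (x (k + 1)))
          + (φ' (x (k + 1)) - φ' (x k)) := by
      rw [map_sub, e1, e2]; abel
    have h4 : ‖adjoint A (p (k + 1 + 1) - p (k + 1))‖
        ≤ (ℓf + ℓφ) * dx (k + 1) + ℓφ * dx k := by
      rw [h3]
      calc ‖-(f' (x (k + 1 + 1)) - f' (x (k + 1))) - (φ' (x (k + 1 + 1)) - φ' (x (k + 1)))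
            + (φ' (x (k + 1)) - φ' (x k))‖
          ≤ ‖-(f' (x (k + 1 + 1)) - f' (x (k + 1))) - (φ' (x (k + 1 + 1)) - φ' (x (k + 1)))‖
            + ‖φ' (x (k + 1)) - φ' (x k)‖ := norm_add_le _ _
        _ ≤ ‖-(f' (x (k + 1 + 1)) - f' (x (k + 1)))‖ + ‖φ' (x (k + 1 + 1)) - φ' (x (k + 1))‖
            + ‖φ' (x (k + 1)) - φ' (x k)‖ := by
            have := norm_sub_le (-(f' (x (k + 1 + 1)) - f' (x (k + 1))))
              (φ' (x (k + 1 + 1)) - φ' (x (k + 1)))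
            linarith
        _ ≤ ℓf * ‖x (k + 1 + 1) - x (k + 1)‖ + ℓφ * ‖x (k + 1 + 1) - x (k + 1)‖
            + ℓφ * ‖x (k + 1) - x k‖ := by
            rw [norm_neg]
            have b1 := hf' (x (k + 1 + 1)) (x (k + 1))
            have b2 := hφ' (x (k + 1 + 1)) (x (k + 1))
            have b3 := hφ' (x (k + 1)) (x k)
            linarith
        _ = (ℓf + ℓφ) * dx (k + 1) + ℓφ * dx k := by
            simp only [hdx_def]; ring
    have h5 := hA (p (k + 1 + 1) - p (k + 1))
    have h6 : ‖adjoint A (p (k + 1 + 1) - p (k + 1))‖ ^ 2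
        ≤ ((ℓf + ℓφ) * dx (k + 1) + ℓφ * dx k) ^ 2 :=
      pow_le_pow_left₀ (norm_nonneg _) h4 2
    have h7 : ((ℓf + ℓφ) * dx (k + 1) + ℓφ * dx k) ^ 2
        ≤ 2 * (ℓf + ℓφ) ^ 2 * dx (k + 1) ^ 2 + 2 * ℓφ ^ 2 * dx k ^ 2 := by
      nlinarith [sq_nonneg ((ℓf + ℓφ) * dx (k + 1) - ℓφ * dx k)]
    have h8 : dp (k + 1) = ‖p (k + 1 + 1) - p (k + 1)‖ := by rw [hdp_def]
    rw [h8]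
    linarith
  -- energy decrease
  have hαμ : 0 < α * μ₀ := by positivity
  set C : ℝ := (ℓf + ℓφ) ^ 2 + ℓφ ^ 2 with hC_def
  set δ : ℝ := α * μ₀ * (μ₁ / 2) - 2 * C with hδ_def
  have hδpos : 0 < δ := by
    rw [hδ_def, hC_def]
    rw [gt_iff_lt, div_lt_iff₀ (by positivity)] at hαbig
    nlinarith
  set E : ℕ → ℝ := fun j => α * μ₀ * Lk (j + 1) + 2 * ℓφ ^ 2 * dx j ^ 2 with hE_def
  have hE : ∀ j, E (j + 1) + δ * dx (j + 1) ^ 2 ≤ E j := by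
    intro j
    have h1 := hdesc (j + 1)
    have h2 := hdpb j
    have h1' := mul_le_mul_of_nonneg_left h1 (le_of_lt hαμ)
    have e1 : α * μ₀ * (1 / α * dp (j + 1) ^ 2) = μ₀ * dp (j + 1) ^ 2 := by
      field_simp
    simp only [hE_def, hδ_def, hC_def]
    nlinarith [h1', h2, e1]
  -- telescoping
  have hsum : ∀ N, δ * (∑ j ∈ Finset.range N, dx (j + 1) ^ 2) ≤ E 0 - E N := by
    intro N
    induction N with
    | zero => simp
    | succ N ih =>
      rw [Finset.sum_range_succ]
      have h1 := hE N
      nlinarith [ih, h1]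
  -- lower bound of the Lagrangian
  obtain ⟨R, hR⟩ := (Metric.isBounded_iff_subset_closedBall
    (0 : EuclideanSpace ℝ (Fin n₁) × EuclideanSpace ℝ (Fin n₂) × EuclideanSpace ℝ (Fin m))).mp hbdd
  have hnorm3 : ∀ k, ‖x k‖ ≤ R ∧ ‖y k‖ ≤ R ∧ ‖p k‖ ≤ R := by
    intro k
    have hmem := hR (Set.mem_range_self k)
    rw [Metric.mem_closedBall, dist_zero_right] at hmem
    refine ⟨le_trans (norm_fst_le (x k, (y k, p k))) hmem, ?_, ?_⟩
    · exact le_trans (le_trans (norm_fst_le (y k, p k)) (norm_snd_le (x k, (y k, p k)))) hmem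
    · exact le_trans (le_trans (norm_snd_le (y k, p k)) (norm_snd_le (x k, (y k, p k)))) hmem
  obtain ⟨mf, hmf⟩ := lsc_bddBelow' (hfC1.continuous.lowerSemicontinuous)
    (isCompact_closedBall (0 : EuclideanSpace ℝ (Fin n₁)) R)
  obtain ⟨mg, hmg⟩ := lsc_bddBelow' hg
    (isCompact_closedBall (0 : EuclideanSpace ℝ (Fin n₂)) R)
  set M : ℝ := mf + mg - R * (‖A‖ * R + ‖B‖ * R) with hM_def
  have hlow : ∀ k, M ≤ Lk k := by
    intro k
    obtain ⟨hxk, hyk, hpk⟩ := hnorm3 k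
    have h1 : mf ≤ f (x k) := hmf _ (by rwa [Metric.mem_closedBall, dist_zero_right])
    have h2 : mg ≤ g (y k) := hmg _ (by rwa [Metric.mem_closedBall, dist_zero_right])
    have h3 : ‖A (x k) - B (y k)‖ ≤ ‖A‖ * R + ‖B‖ * R := by
      calc ‖A (x k) - B (y k)‖ ≤ ‖A (x k)‖ + ‖B (y k)‖ := norm_sub_le _ _
        _ ≤ ‖A‖ * R + ‖B‖ * R := by
          have ha1 := A.le_opNorm (x k)
          have hb1 := B.le_opNorm (y k)
          have ha2 := mul_le_mul_of_nonneg_left hxk (norm_nonneg A)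
          have hb2 := mul_le_mul_of_nonneg_left hyk (norm_nonneg B)
          linarith
    have h4 : -(R * (‖A‖ * R + ‖B‖ * R)) ≤ ⟪p k, A (x k) - B (y k)⟫_ℝ := by
      have h5 := abs_real_inner_le_norm (p k) (A (x k) - B (y k))
      have h6 : ‖p k‖ * ‖A (x k) - B (y k)‖ ≤ R * (‖A‖ * R + ‖B‖ * R) :=
        mul_le_mul hpk h3 (norm_nonneg _) (le_trans (norm_nonneg _) hpk)
      have h7 := neg_abs_le ⟪p k, A (x k) - B (y k)⟫_ℝ
      linarith
    have h8 : (0:ℝ) ≤ α / 2 * ‖A (x k) - B (y k)‖ ^ 2 := by positivity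
    simp only [hLk_def, hM_def, augL]
    linarith
  have hElow : ∀ N, α * μ₀ * M ≤ E N := by
    intro N
    have h1 := mul_le_mul_of_nonneg_left (hlow (N + 1)) (le_of_lt hαμ)
    have h2 : (0:ℝ) ≤ 2 * ℓφ ^ 2 * dx N ^ 2 := by positivity
    simp only [hE_def]
    linarith
  -- summability and vanishing of steps
  have hsummable : Summable (fun j => dx (j + 1) ^ 2) := by
    apply summable_of_sum_range_le (c := (E 0 - α * μ₀ * M) / δ) (fun n => sq_nonneg _)
    intro N
    rw [le_div_iff₀ hδpos]
    have h1 := hsum N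
    have h2 := hElow N
    nlinarith
  have htend0 : Tendsto (fun j => dx (j + 1) ^ 2) atTop (𝓝 0) := hsummable.tendsto_atTop_zero
  have sqrt_trick : ∀ u : ℕ → ℝ, (∀ k, 0 ≤ u k) →
      Tendsto (fun k => u k ^ 2) atTop (𝓝 0) → Tendsto u atTop (𝓝 0) := by
    intro u hu h
    have hc := (Real.continuous_sqrt.tendsto 0).comp h
    simp only [Function.comp_def] at hc
    rw [Real.sqrt_zero] at hc
    exact hc.congr fun k => Real.sqrt_sq (hu k)
  have hdxnonneg : ∀ k, 0 ≤ dx k := by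
    intro k; rw [hdx_def]; exact norm_nonneg _
  have hdpnonneg : ∀ k, 0 ≤ dp k := by
    intro k; rw [hdp_def]; exact norm_nonneg _
  have hdx1 : Tendsto (fun j => dx (j + 1)) atTop (𝓝 0) :=
    sqrt_trick _ (fun k => hdxnonneg _) htend0
  have hdxt : Tendsto dx atTop (𝓝 0) := (tendsto_add_atTop_iff_nat 1).mp hdx1
  have hdxsq : Tendsto (fun k => dx k ^ 2) atTop (𝓝 0) := by
    have := hdxt.pow 2
    simpa using this
  have hdp2 : Tendsto (fun k => dp (k + 1) ^ 2) atTop (𝓝 0) := by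
    have hb : ∀ k, dp (k + 1) ^ 2 ≤
        1 / μ₀ * (2 * (ℓf + ℓφ) ^ 2 * dx (k + 1) ^ 2 + 2 * ℓφ ^ 2 * dx k ^ 2) := by
      intro k
      have h := mul_le_mul_of_nonneg_left (hdpb k) (le_of_lt (by positivity : (0:ℝ) < 1 / μ₀))
      calc dp (k + 1) ^ 2 = 1 / μ₀ * (μ₀ * dp (k + 1) ^ 2) := by field_simp
        _ ≤ _ := h
    have hrhs : Tendsto (fun k =>
        1 / μ₀ * (2 * (ℓf + ℓφ) ^ 2 * dx (k + 1) ^ 2 + 2 * ℓφ ^ 2 * dx k ^ 2)) atTop (𝓝 0) := by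
      have h1 := htend0.const_mul (2 * (ℓf + ℓφ) ^ 2)
      have h2 := hdxsq.const_mul (2 * ℓφ ^ 2)
      have h3 := (h1.add h2).const_mul (1 / μ₀)
      simpa using h3
    exact squeeze_zero (fun k => sq_nonneg _) hb hrhs
  have hdp1 : Tendsto (fun k => dp (k + 1)) atTop (𝓝 0) :=
    sqrt_trick _ (fun k => hdpnonneg _) hdp2
  have hdpt : Tendsto dp atTop (𝓝 0) := (tendsto_add_atTop_iff_nat 1).mp hdp1
  -- the residual vanishes
  have hres : Tendsto (fun k => ‖A (x k) - B (y k)‖) atTop (𝓝 0) := by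
    have h1 : ∀ k, ‖A (x (k + 1)) - B (y (k + 1))‖ = dp k / α := by
      intro k
      have hq : p (k + 1) - p k = α • (A (x (k + 1)) - B (y (k + 1))) := by rw [hp k]; abel
      have h2 : dp k = α * ‖A (x (k + 1)) - B (y (k + 1))‖ := by
        rw [hdp_def]
        simp only
        rw [hq, norm_smul, Real.norm_eq_abs, abs_of_pos hα]
      rw [h2]
      field_simp
    have h2 : Tendsto (fun k => dp k / α) atTop (𝓝 0) := by
      have := hdpt.div_const α
      simpa using this
    exact (tendsto_add_atTop_iff_nat 1).mp (h2.congr fun k => (h1 k).symm)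
  -- subsequence limits
  have hxj : Tendsto (fun j => x (kj j)) atTop (𝓝 xs) := (continuous_fst.tendsto _).comp hconv
  have hyj : Tendsto (fun j => y (kj j)) atTop (𝓝 ys) :=
    ((continuous_fst.comp continuous_snd).tendsto _).comp hconv
  have hpj : Tendsto (fun j => p (kj j)) atTop (𝓝 ps) :=
    ((continuous_snd.comp continuous_snd).tendsto _).comp hconv
  -- second conclusion
  have hABj : Tendsto (fun j => ‖A (x (kj j)) - B (y (kj j))‖) atTop (𝓝 ‖A xs - B ys‖) := by
    have h1 : Tendsto (fun j => A (x (kj j)) - B (y (kj j))) atTop (𝓝 (A xs - B ys)) :=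
      ((A.continuous.tendsto xs).comp hxj).sub ((B.continuous.tendsto ys).comp hyj)
    exact (continuous_norm.tendsto _).comp h1
  have hrj : Tendsto (fun j => ‖A (x (kj j)) - B (y (kj j))‖) atTop (𝓝 0) :=
    hres.comp hkj.tendsto_atTop
  have hABeq : A xs = B ys := by
    have h0 := tendsto_nhds_unique hABj hrj
    rw [← sub_eq_zero]
    exact norm_eq_zero.mp h0
  -- first conclusion
  have hfp : ∀ k, f' (x (k + 1)) + adjoint A (p (k + 1)) = φ' (x k) - φ' (x (k + 1)) := by
    intro k
    apply eq_of_sub_eq_zero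
    rw [← hkey k]; abel
  have hwnorm : ∀ k, ‖f' (x (k + 1)) + adjoint A (p (k + 1))‖ ≤ ℓφ * dx k := by
    intro k
    rw [hfp k]
    calc ‖φ' (x k) - φ' (x (k + 1))‖ ≤ ℓφ * ‖x k - x (k + 1)‖ := hφ' (x k) (x (k + 1))
      _ = ℓφ * dx k := by rw [hdx_def]; simp only; rw [norm_sub_rev]
  have hw1 : Tendsto (fun k => f' (x (k + 1)) + adjoint A (p (k + 1))) atTop (𝓝 0) := by
    rw [tendsto_zero_iff_norm_tendsto_zero]
    apply squeeze_zero (fun k => norm_nonneg _) hwnorm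
    simpa using hdxt.const_mul ℓφ
  have hwt : Tendsto (fun k => f' (x k) + adjoint A (p k)) atTop (𝓝 0) :=
    (tendsto_add_atTop_iff_nat 1).mp hw1
  have hwj : Tendsto (fun j => f' (x (kj j)) + adjoint A (p (kj j))) atTop (𝓝 0) :=
    hwt.comp hkj.tendsto_atTop
  have hfj : Tendsto (fun j => f' (x (kj j))) atTop (𝓝 (f' xs)) := by
    rw [tendsto_iff_norm_sub_tendsto_zero]
    apply squeeze_zero (fun j => norm_nonneg _) (fun j => hf' (x (kj j)) xs)
    have hx0 : Tendsto (fun j => ‖x (kj j) - xs‖) atTop (𝓝 0) :=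
      tendsto_iff_norm_sub_tendsto_zero.mp hxj
    simpa using hx0.const_mul ℓf
  have hpj' : Tendsto (fun j => adjoint A (p (kj j))) atTop (𝓝 (adjoint A ps)) :=
    ((adjoint A).continuous.tendsto _).comp hpj
  have hsum2 : Tendsto (fun j => f' (x (kj j)) + adjoint A (p (kj j)))
      atTop (𝓝 (f' xs + adjoint A ps)) := hfj.add hpj'
  exact ⟨tendsto_nhds_unique hsum2 hwj, hABeq⟩
end
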